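/- Let φ ∈ Λ^p V* with associated (p-1)-fold product ρ. For a unit decomposable p-vector ξ = e₁∧⋯∧e_p, the product ρ vanishes identically on the p-plane [ξ] = span{e₁,…,e_p} (i.e. ρ(v₂,…,v_p)=0 for all v_i ∈ [ξ]) if and only if ξ is a critical point of φ on Gr_o(p,V) and φ(ξ) = 0. -/

import Mathlib

open scoped RealInnerProductSpace

private lemma update_eq_cons_comp {V : Type*} [AddCommMonoid V]
    {q : ℕ} (e : Fin (q + 1) → V) (a : Fin (q + 1)) (v : V) :
    Function.update e a v = (Fin.cons v (e ∘ a.succAbove)) ∘ a.cycleRange := by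
  funext i
  rcases eq_or_ne i a with rfl | h
  · simp [Fin.cycleRange_self]
  · obtain ⟨j, rfl⟩ := Fin.exists_succAbove_eq h
    simp [Function.update_of_ne (a.succAbove_ne j), Fin.cycleRange_succAbove]

private lemma phi_update_eq {V : Type*} [AddCommGroup V] [Module ℝ V]
    {q : ℕ} (φ : AlternatingMap ℝ V ℝ (Fin (q + 1)))
    (e : Fin (q + 1) → V) (a : Fin (q + 1)) (v : V) :
    φ (Function.update e a v)
      = Equiv.Perm.sign a.cycleRange • φ (Fin.cons v (e ∘ a.succAbove)) := by
  rw [update_eq_cons_comp]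
  exact φ.map_perm _ _

/-- **Corollary (vanishing product).**  Let `ρ` be the `q`-fold vector product associated
to `φ ∈ Λ^{q+1} V*`.  For a unit decomposable `(q+1)`-vector `ξ = e₁ ∧ ⋯ ∧ e_p`, the
product `ρ` vanishes identically on the plane `[ξ] = span{e₁,…,e_p}` if and only if
`ξ` is a critical point of `φ` on `Gr_o(p,V)` (First Cousin Principle) and `φ(ξ) = 0`. -/
theorem rho_vanishes_iff_critical_and_zero
    {V : Type*} [NormedAddCommGroup V] [InnerProductSpace ℝ V] [FiniteDimensional ℝ V]
    {q : ℕ} (φ : AlternatingMap ℝ V ℝ (Fin (q + 1)))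
    (ρ : (Fin q → V) → V)
    (hρ : ∀ (u : V) (vs : Fin q → V), ⟪u, ρ vs⟫ = φ (Fin.cons u vs))
    (e : Fin (q + 1) → V) (he : Orthonormal ℝ e) :
    (∀ vs : Fin q → V, (∀ i, vs i ∈ Submodule.span ℝ (Set.range e)) → ρ vs = 0)
    ↔ ((∀ v : V, (∀ i, ⟪v, e i⟫ = 0) → ∀ a : Fin (q + 1),
          φ (Function.update e a v) = 0) ∧ φ e = 0) := by
  classical
  set W := Submodule.span ℝ (Set.range e) with hW
  have heW : ∀ i, e i ∈ W := fun i => Submodule.subset_span ⟨i, rfl⟩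
  constructor
  · intro h
    refine ⟨?_, ?_⟩
    · intro v _ a
      rw [phi_update_eq]
      have h0 : ρ (e ∘ a.succAbove) = 0 := h _ (fun i => heW _)
      have hinner := hρ v (e ∘ a.succAbove)
      rw [h0, inner_zero_right] at hinner
      rw [← hinner, smul_zero]
    · have h0 : ρ (Fin.tail e) = 0 := h _ (fun i => heW _)
      have hinner := hρ (e 0) (Fin.tail e)
      rw [h0, inner_zero_right, Fin.cons_self_tail] at hinner
      exact hinner.symm
  · rintro ⟨hcrit, hzero⟩
    have hli := he.linearIndependent
    let b : Module.Basis (Fin (q + 1)) ℝ W := Module.Basis.span hli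
    have hb : ∀ i, (b i : V) = e i := fun i => by simp [b, Module.Basis.span_apply hli i]
    have hee : ∀ i j, ⟪e i, e j⟫ = if i = j then (1:ℝ) else 0 := orthonormal_iff_ite.mp he
    have key : ∀ (u : V) (vs : Fin q → V), (∀ i, vs i ∈ W) → φ (Fin.cons u vs) = 0 := by
      intro u vs hvs
      set s : V := ∑ i, ⟪u, e i⟫ • e i with hs
      have hsW : s ∈ W := Submodule.sum_mem _ fun i _ => Submodule.smul_mem _ _ (heW i)
      have hperp : ∀ j, ⟪u - s, e j⟫ = 0 := by
        intro j
        have hse : ⟪s, e j⟫ = ⟪u, e j⟫ := by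
          rw [hs, sum_inner]
          simp [real_inner_smul_left, hee, mul_ite]
        rw [inner_sub_left, hse, sub_self]
      -- all arguments in W ⇒ φ vanishes
      have hWzero : φ.compLinearMap W.subtype = 0 := by
        rw [← AlternatingMap.map_basis_eq_zero_iff b]
        have : (φ.compLinearMap W.subtype) b = φ e := by
          rw [AlternatingMap.compLinearMap_apply]
          congr 1
          funext i
          exact hb i
        rw [this, hzero]
      -- the term with s
      have h2 : φ (Fin.cons s vs) = 0 := by
        have hmem : ∀ i, (Fin.cons s vs : Fin (q + 1) → V) i ∈ W := by
          intro i
          refine Fin.cases ?_ ?_ i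
          · simpa using hsW
          · intro j; simpa using hvs j
        have : φ (Fin.cons s vs) = (φ.compLinearMap W.subtype) (fun i => ⟨(Fin.cons s vs : Fin (q + 1) → V) i, hmem i⟩) := by
          rw [AlternatingMap.compLinearMap_apply]
          rfl
        rw [this, hWzero, AlternatingMap.zero_apply]
      -- the term with p := u - s
      have h1 : φ (Fin.cons (u - s) vs) = 0 := by
        set p := u - s with hp
        have hg : (φ.curryLeft p).compLinearMap W.subtype = 0 := by
          refine Module.Basis.ext_alternating b (fun v hv => ?_)
          rw [AlternatingMap.zero_apply]
          have hnotsurj : ¬ Function.Surjective v := by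
            intro hsurj
            have := Fintype.card_le_of_surjective v hsurj
            simp [Fintype.card_fin] at this
          obtain ⟨a, ha⟩ := not_forall.mp hnotsurj
          have ha' : ∀ j, v j ≠ a := by
            intro j hj
            exact ha ⟨j, hj⟩
          choose τ hτ using fun j => Fin.exists_succAbove_eq (ha' j)
          have hτinj : Function.Injective τ := by
            intro i j hij
            apply hv
            rw [← hτ i, ← hτ j, hij]
          let σ : Equiv.Perm (Fin q) := Equiv.ofBijective τ
            (Finite.injective_iff_bijective.mp hτinj)
          have hcomp : (fun i => e (v i)) = (e ∘ a.succAbove) ∘ σ := by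
            funext i
            show e (v i) = e (a.succAbove (τ i))
            rw [hτ]
          have hz : φ (Fin.cons p (e ∘ a.succAbove)) = 0 := by
            have h0 := hcrit p (fun i => hperp i) a
            rw [phi_update_eq] at h0
            rcases Int.units_eq_one_or (Equiv.Perm.sign a.cycleRange) with hsg | hsg <;>
              · rw [hsg] at h0
                simpa using h0
          have : (φ.curryLeft p).compLinearMap W.subtype (fun i => b (v i))
              = φ.curryLeft p (fun i => e (v i)) := by
            rw [AlternatingMap.compLinearMap_apply]
            congr 1
            funext i
            exact hb (v i)
          rw [this, hcomp, (φ.curryLeft p).map_perm]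
          have : φ.curryLeft p (e ∘ a.succAbove) = φ (Fin.cons p (e ∘ a.succAbove)) := rfl
          rw [this, hz, smul_zero]
        have : φ (Fin.cons p vs)
            = (φ.curryLeft p).compLinearMap W.subtype (fun i => ⟨vs i, hvs i⟩) := by
          rw [AlternatingMap.compLinearMap_apply]
          rfl
        rw [this, hg, AlternatingMap.zero_apply]
      have hu : φ (Fin.cons u vs) = φ (Fin.cons (u - s) vs) + φ (Fin.cons s vs) := by
        show φ.curryLeft u vs = φ.curryLeft (u - s) vs + φ.curryLeft s vs
        rw [← AlternatingMap.add_apply, ← map_add, sub_add_cancel]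
      rw [hu, h1, h2, add_zero]
    intro vs hvs
    have : ⟪ρ vs, ρ vs⟫ = 0 := by
      rw [hρ]
      exact key _ _ hvs
    exact inner_self_eq_zero.mp this
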